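/- Let G : ℝ → ℝ be continuous and 2π-periodic, and for E > max G define Ī(E) := (1/(2π))·∫₀^{2π} √(E − G(x)) dx. Then Ī is twice continuously differentiable and strictly increasing on (max G, +∞), and for every E > max G one has −Ī''(E) ≥ 2·(Ī'(E))³; consequently, the inverse function Ē of Ī satisfies Ē''(I) ≥ 2 for every I in the range of Ī. -/

import Mathlib

open scoped Real
open MeasureTheory Set Filter

private lemma hasDerivAt_J (G : ℝ → ℝ) (hGc : Continuous G) (M m : ℝ)
    (hMub : ∀ x, G x ≤ M) (hmlb : ∀ x, m ≤ G x) (s : ℝ) (E : ℝ) (hE : M < E) :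
    HasDerivAt (fun E => ∫ x in (0:ℝ)..(2*π), (E - G x) ^ s)
      (s * ∫ x in (0:ℝ)..(2*π), (E - G x) ^ (s - 1)) E := by
  have hEM : 0 < E - M := sub_pos.2 hE
  set ε : ℝ := (E - M) / 2 with hεdef
  have hε : 0 < ε := by positivity
  have hpos : ∀ y ∈ Metric.ball E ε, ∀ t : ℝ, ε ≤ y - G t := by
    intro y hy t
    have h1 : |y - E| < ε := by simpa [Real.dist_eq] using hy
    have h2 : G t ≤ M := hMub t
    have := abs_lt.1 h1
    have : E - ε < y := by linarith [this.1]
    have : E - ε - M ≤ y - G t := by linarith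
    calc ε = E - ε - M := by rw [hεdef]; ring
    _ ≤ y - G t := this
  have hpos' : ∀ y ∈ Metric.ball E ε, ∀ t : ℝ, 0 < y - G t :=
    fun y hy t => lt_of_lt_of_le hε (hpos y hy t)
  have hub : ∀ y ∈ Metric.ball E ε, ∀ t : ℝ, y - G t ≤ E + ε - m := by
    intro y hy t
    have h1 := (abs_lt.1 (by simpa [Real.dist_eq] using hy)).2
    have := hmlb t
    linarith
  have key := intervalIntegral.hasDerivAt_integral_of_dominated_loc_of_deriv_le
    (F := fun y t => (y - G t) ^ s) (F' := fun y t => s * (y - G t) ^ (s - 1))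
    (x₀ := E) (a := (0:ℝ)) (b := 2*π) (μ := volume)
    (bound := fun _ => |s| * (ε ^ (s-1) + (E + ε - m) ^ (s-1))) (Metric.ball_mem_nhds E hε)
    ?_ ?_ ?_ ?_ ?_ ?_
  · rw [← intervalIntegral.integral_const_mul]
    exact key.2
  · refine Filter.eventually_of_mem (Metric.ball_mem_nhds E hε) (fun y hy => ?_)
    exact ((continuous_const.sub hGc).rpow_const
      (fun t => Or.inl (hpos' y hy t).ne')).aestronglyMeasurable
  · exact ((continuous_const.sub hGc).rpow_const
      (fun t => Or.inl (hpos' E (Metric.mem_ball_self hε) t).ne')).intervalIntegrable _ _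
  · exact (continuous_const.mul ((continuous_const.sub hGc).rpow_const
      (fun t => Or.inl (hpos' E (Metric.mem_ball_self hε) t).ne'))).aestronglyMeasurable
  · refine Filter.Eventually.of_forall (fun t _ y hy => ?_)
    have hb0 : 0 < y - G t := hpos' y hy t
    have hkey : (y - G t) ^ (s-1) ≤ ε ^ (s-1) + (E + ε - m) ^ (s-1) := by
      rcases le_or_gt (s - 1) 0 with hc | hc
      · have := Real.rpow_le_rpow_of_nonpos hε (hpos y hy t) hc
        have h2 : (0:ℝ) ≤ (E + ε - m) ^ (s-1) := Real.rpow_nonneg (by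
          have := hub y hy t; linarith) _
        linarith
      · have := Real.rpow_le_rpow hb0.le (hub y hy t) hc.le
        have h2 : (0:ℝ) ≤ ε ^ (s-1) := Real.rpow_nonneg hε.le _
        linarith
    have : ‖s * (y - G t) ^ (s-1)‖ = |s| * (y - G t) ^ (s-1) := by
      rw [norm_mul, Real.norm_eq_abs, Real.norm_eq_abs,
        abs_of_nonneg (Real.rpow_nonneg hb0.le _)]
    rw [this]
    exact mul_le_mul_of_nonneg_left hkey (abs_nonneg s)
  · exact intervalIntegrable_const
  · refine Filter.Eventually.of_forall (fun t _ y hy => ?_)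
    have hb0 : 0 < y - G t := hpos' y hy t
    have h1 := Real.hasDerivAt_rpow_const (x := y - G t) (p := s) (Or.inl hb0.ne')
    have h2 : HasDerivAt (fun y : ℝ => y - G t) 1 y := (hasDerivAt_id y).sub_const (G t)
    simpa [Function.comp_def] using h1.comp y h2

/-- Let `G : ℝ → ℝ` be continuous and `2π`-periodic, and for `E > max G` let
`Ī(E) := (1/2π)·∫₀^{2π} √(E − G x) dx`. Then `Ī` is C², strictly increasing on `(max G, ∞)`,
satisfies `−Ī'' ≥ 2(Ī')³` there, and its inverse `Ē` satisfies `Ē'' ≥ 2` on the range of `Ī`. -/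
theorem outer_action_convexity (G : ℝ → ℝ) (hGc : Continuous G)
    (hGper : ∀ x, G (x + 2 * π) = G x) :
    ∀ (M : ℝ), M = sSup (Set.range G) →
    ∀ (Ibar : ℝ → ℝ),
      (Ibar = fun E => (1 / (2 * π)) * ∫ x in (0 : ℝ)..(2 * π), Real.sqrt (E - G x)) →
      ContDiffOn ℝ 2 Ibar (Set.Ioi M) ∧
      StrictMonoOn Ibar (Set.Ioi M) ∧
      (∀ E ∈ Set.Ioi M, 2 * (deriv Ibar E) ^ 3 ≤ -(deriv (deriv Ibar) E)) ∧
      ∃ Ebar : ℝ → ℝ,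
        ContDiffOn ℝ 2 Ebar (Ibar '' Set.Ioi M) ∧
        (∀ E ∈ Set.Ioi M, Ebar (Ibar E) = E) ∧
        ∀ E ∈ Set.Ioi M, 2 ≤ deriv (deriv Ebar) (Ibar E) := by
  intro M hM Ibar hIb
  have hπ : (0:ℝ) < π := Real.pi_pos
  have h2π : (0:ℝ) < 2 * π := by linarith
  -- bounds for G
  have hper : Function.Periodic G (2 * π) := hGper
  have hcomp : IsCompact (Set.range G) := hper.compact_of_continuous h2π.ne' hGc
  have hMub : ∀ x, G x ≤ M := fun x => hM ▸ le_csSup hcomp.bddAbove ⟨x, rfl⟩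
  set m : ℝ := sInf (Set.range G) with hm
  have hmlb : ∀ x, m ≤ G x := fun x => csInf_le hcomp.bddBelow ⟨x, rfl⟩
  -- the family of integrals
  set J : ℝ → ℝ → ℝ := fun s E => ∫ x in (0:ℝ)..(2*π), (E - G x) ^ s with hJ
  have hJd : ∀ s : ℝ, ∀ E ∈ Set.Ioi M, HasDerivAt (J s) (s * J (s-1) E) E :=
    fun s E hE => hasDerivAt_J G hGc M m hMub hmlb s E hE
  have hEpos : ∀ E ∈ Set.Ioi M, ∀ x : ℝ, 0 < E - G x := by
    intro E hE x; have := hMub x; simp only [Set.mem_Ioi] at hE; linarith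
  have hJcont : ∀ s : ℝ, ∀ E ∈ Set.Ioi M, Continuous fun x => (E - G x) ^ s := by
    intro s E hE
    exact (continuous_const.sub hGc).rpow_const (fun x => Or.inl (hEpos E hE x).ne')
  have hJpos : ∀ s : ℝ, ∀ E ∈ Set.Ioi M, 0 < J s E := by
    intro s E hE
    exact intervalIntegral.intervalIntegral_pos_of_pos
      ((hJcont s E hE).intervalIntegrable _ _)
      (fun x => Real.rpow_pos_of_pos (hEpos E hE x) s) h2π
  -- rewrite Ibar with rpow
  have hIbJ : Ibar = fun E => (1/(2*π)) * J ((1:ℝ)/2) E := by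
    rw [hIb]; funext E; congr 1
    exact intervalIntegral.integral_congr (fun x _ => Real.sqrt_eq_rpow _)
  set D1 : ℝ → ℝ := fun E => (1/(4*π)) * J (-(1/2)) E with hD1
  set D2 : ℝ → ℝ := fun E => -((1/(8*π)) * J (-(3/2)) E) with hD2
  have hId : ∀ E ∈ Set.Ioi M, HasDerivAt Ibar (D1 E) E := by
    intro E hE
    have h := (hJd ((1:ℝ)/2) E hE).const_mul (1/(2*π))
    rw [hIbJ]
    refine h.congr_deriv ?_
    have : (1:ℝ)/2 - 1 = -(1/2) := by norm_num
    rw [this, hD1]; ring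
  have hD1d : ∀ E ∈ Set.Ioi M, HasDerivAt D1 (D2 E) E := by
    intro E hE
    have h := (hJd (-(1/2)) E hE).const_mul (1/(4*π))
    refine h.congr_deriv ?_
    have : -(1/2) - 1 = -(3/2 : ℝ) := by norm_num
    rw [this, hD2]; ring
  have hderiv1 : ∀ E ∈ Set.Ioi M, deriv Ibar E = D1 E := fun E hE => (hId E hE).deriv
  have hderiv2 : ∀ E ∈ Set.Ioi M, deriv (deriv Ibar) E = D2 E := by
    intro E hE
    have hev : deriv Ibar =ᶠ[nhds E] D1 :=
      Filter.eventuallyEq_of_mem (isOpen_Ioi.mem_nhds hE) hderiv1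
    rw [hev.deriv_eq]
    exact (hD1d E hE).deriv
  have hdiffI : DifferentiableOn ℝ Ibar (Set.Ioi M) :=
    fun E hE => ((hId E hE).differentiableAt).differentiableWithinAt
  -- C² of Ibar
  have hC2 : ContDiffOn ℝ 2 Ibar (Set.Ioi M) := by
    rw [show (2 : WithTop ℕ∞) = 1 + 1 from by norm_num,
      contDiffOn_succ_iff_deriv_of_isOpen isOpen_Ioi]
    refine ⟨hdiffI, by simp, ?_⟩
    refine ContDiffOn.congr ?_ hderiv1
    rw [show (1 : WithTop ℕ∞) = 0 + 1 from by norm_num,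
      contDiffOn_succ_iff_deriv_of_isOpen isOpen_Ioi]
    refine ⟨fun E hE => ((hD1d E hE).differentiableAt).differentiableWithinAt, by simp, ?_⟩
    rw [contDiffOn_zero]
    have hD2cont : ContinuousOn D2 (Set.Ioi M) := by
      have hc : DifferentiableOn ℝ (J (-(3/2))) (Set.Ioi M) :=
        fun E hE => ((hJd (-(3/2)) E hE).differentiableAt).differentiableWithinAt
      exact (continuousOn_const.mul hc.continuousOn).neg
    refine hD2cont.congr (fun E hE => ?_)
    exact (hD1d E hE).deriv
  have hDpos : ∀ E ∈ Set.Ioi M, 0 < deriv Ibar E := by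
    intro E hE
    rw [hderiv1 E hE, hD1]
    have := hJpos (-(1/2)) E hE
    positivity
  -- strict monotonicity
  have hmono : StrictMonoOn Ibar (Set.Ioi M) := by
    refine strictMonoOn_of_deriv_pos (convex_Ioi M) (hdiffI.continuousOn) ?_
    intro E hE
    rw [interior_Ioi] at hE
    exact hDpos E hE
  -- Jensen's inequality part
  have hkey : ∀ E ∈ Set.Ioi M, 2 * (deriv Ibar E) ^ 3 ≤ -(deriv (deriv Ibar) E) := by
    intro E hE
    set f : ℝ → ℝ := fun x => (E - G x) ^ (-(1/2) : ℝ) with hf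
    have hfc : Continuous f := hJcont _ E hE
    have hcube : ∀ x : ℝ, ((E - G x) ^ (-(1/2) : ℝ)) ^ 3 = (E - G x) ^ (-(3/2) : ℝ) := by
      intro x
      rw [← Real.rpow_natCast ((E - G x) ^ (-(1/2):ℝ)) 3, ← Real.rpow_mul (hEpos E hE x).le]
      norm_num
    have ht0 : volume (Set.Ioc (0:ℝ) (2*π)) ≠ 0 := by
      simp only [Real.volume_Ioc]
      simp only [ne_eq, ENNReal.ofReal_eq_zero, not_le]
      linarith
    have htt : volume (Set.Ioc (0:ℝ) (2*π)) ≠ ⊤ := by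
      exact measure_Ioc_lt_top.ne
    have hjen := (convexOn_pow 3).map_set_average_le
      (continuous_pow 3).continuousOn isClosed_Ici ht0 htt
      (Filter.Eventually.of_forall (fun x => Real.rpow_nonneg (hEpos E hE x).le _))
      (hfc.integrableOn_Ioc) ((hfc.pow 3).integrableOn_Ioc)
    rw [MeasureTheory.setAverage_eq, MeasureTheory.setAverage_eq] at hjen
    have hvol : (volume (Set.Ioc (0:ℝ) (2*π))).toReal = 2*π := by
      rw [Real.volume_Ioc]
      rw [ENNReal.toReal_ofReal (by linarith)]
      ring
    rw [measureReal_def, hvol] at hjen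
    have hint1 : ∫ x in Set.Ioc (0:ℝ) (2*π), f x = J (-(1/2)) E :=
      (intervalIntegral.integral_of_le (by linarith)).symm
    have hint3 : ∫ x in Set.Ioc (0:ℝ) (2*π), ((E - G x) ^ (-(1/2):ℝ)) ^ 3 = J (-(3/2)) E := by
      simp only [hcube]
      exact (intervalIntegral.integral_of_le (by linarith)).symm
    rw [hint1, hint3] at hjen
    rw [hderiv1 E hE, hderiv2 E hE, hD1, hD2]
    set A := J (-(1/2)) E
    set B := J (-(3/2)) E
    simp only [smul_eq_mul] at hjen
    have h4 : 2 * ((1/(4*π)) * A) ^ 3 = (1/4) * (((2*π)⁻¹ * A) ^ 3) := by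
      ring
    have h5 : -(-((1/(8*π)) * B)) = (1/4) * ((2*π)⁻¹ * B) := by
      ring
    rw [h4, h5]
    linarith
  refine ⟨hC2, hmono, hkey, ?_⟩
  -- inverse function part
  have hinj : Set.InjOn Ibar (Set.Ioi M) := hmono.injOn
  set Ebar : ℝ → ℝ := Function.invFunOn Ibar (Set.Ioi M) with hEbar
  have hleft : ∀ E ∈ Set.Ioi M, Ebar (Ibar E) = E := fun E hE => hinj.leftInvOn_invFunOn hE
  have hnbhd : ∀ E ∈ Set.Ioi M, ∀ᶠ y in nhds (Ibar E), Ebar y ∈ Set.Ioi M ∧ Ibar (Ebar y) = y := by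
    intro E hE
    simp only [Set.mem_Ioi] at hE
    set a := (M + E)/2 with ha
    set b := E + 1 with hb
    have haM : M < a := by rw [ha]; linarith
    have haE : a < E := by rw [ha]; linarith
    have hEb : E < b := by rw [hb]; linarith
    have haS : a ∈ Set.Ioi M := haM
    have hES : E ∈ Set.Ioi M := hE
    have hbS : b ∈ Set.Ioi M := by simp only [Set.mem_Ioi]; linarith
    have hV : Set.Ioo (Ibar a) (Ibar b) ∈ nhds (Ibar E) :=
      isOpen_Ioo.mem_nhds ⟨hmono haS hES haE, hmono hES hbS hEb⟩
    have hsub : Set.Ioo (Ibar a) (Ibar b) ⊆ Ibar '' Set.Icc a b := by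
      have hIccS : Set.Icc a b ⊆ Set.Ioi M := fun x hx => lt_of_lt_of_le haM hx.1
      have hiv := intermediate_value_Icc (le_of_lt (lt_trans haE hEb))
        (hdiffI.continuousOn.mono hIccS)
      exact fun y hy => hiv ⟨le_of_lt hy.1, le_of_lt hy.2⟩
    refine Filter.eventually_of_mem hV (fun y hy => ?_)
    obtain ⟨E', hE', hEq⟩ := hsub hy
    have hE'S : E' ∈ Set.Ioi M := lt_of_lt_of_le haM hE'.1
    have hex : ∃ x ∈ Set.Ioi M, Ibar x = y := ⟨E', hE'S, hEq⟩
    exact ⟨Function.invFunOn_mem hex, Function.invFunOn_eq hex⟩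
  have hEd : ∀ E ∈ Set.Ioi M, HasStrictDerivAt Ebar (deriv Ibar E)⁻¹ (Ibar E) := by
    intro E hE
    have hstrict : HasStrictDerivAt Ibar (deriv Ibar E) E :=
      (hC2.contDiffAt (isOpen_Ioi.mem_nhds hE)).hasStrictDerivAt (by norm_num)
    have hd0 : deriv Ibar E ≠ 0 := ne_of_gt (hDpos E hE)
    have hg : ∀ᶠ x in nhds E, Ebar (Ibar x) = x :=
      Filter.eventually_of_mem (isOpen_Ioi.mem_nhds hE) hleft
    exact hstrict.to_local_left_inverse hd0 hg
  have hC1d : ContDiffOn ℝ 1 (deriv Ibar) (Set.Ioi M) :=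
    hC2.deriv_of_isOpen isOpen_Ioi (by norm_num)
  refine ⟨Ebar, ?_, hleft, ?_⟩
  · -- C² of Ebar on the image
    rintro y ⟨E, hE, rfl⟩
    suffices h : ContDiffAt ℝ 2 Ebar (Ibar E) from h.contDiffWithinAt
    obtain ⟨V, hVsub, hVopen, hVmem⟩ := mem_nhds_iff.1 (hnbhd E hE)
    have hVprop : ∀ y ∈ V, Ebar y ∈ Set.Ioi M ∧ Ibar (Ebar y) = y := fun y hy => hVsub hy
    have hdiffV : DifferentiableOn ℝ Ebar V := by
      intro y hy
      have h1 := (hEd (Ebar y) (hVprop y hy).1).hasDerivAt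
      rw [(hVprop y hy).2] at h1
      exact h1.differentiableAt.differentiableWithinAt
    have hmapsTo : Set.MapsTo Ebar V (Set.Ioi M) := fun y hy => (hVprop y hy).1
    have hderivEq : ∀ y ∈ V, deriv Ebar y = (deriv Ibar (Ebar y))⁻¹ := by
      intro y hy
      have h1 := (hEd (Ebar y) (hVprop y hy).1).hasDerivAt
      rw [(hVprop y hy).2] at h1
      exact h1.deriv
    have hne : ∀ y ∈ V, deriv Ibar (Ebar y) ≠ 0 :=
      fun y hy => ne_of_gt (hDpos _ (hVprop y hy).1)
    have hφcont : ContinuousOn (fun y => (deriv Ibar (Ebar y))⁻¹) V :=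
      ((hC1d.continuousOn).comp hdiffV.continuousOn hmapsTo).inv₀ hne
    have hC1Ebar : ContDiffOn ℝ 1 Ebar V := by
      rw [show (1 : WithTop ℕ∞) = 0 + 1 from by norm_num,
        contDiffOn_succ_iff_deriv_of_isOpen hVopen]
      exact ⟨hdiffV, by simp, contDiffOn_zero.2 (hφcont.congr hderivEq)⟩
    have hφC1 : ContDiffOn ℝ 1 (fun y => (deriv Ibar (Ebar y))⁻¹) V :=
      (hC1d.comp hC1Ebar hmapsTo).inv hne
    have hC2Ebar : ContDiffOn ℝ 2 Ebar V := by
      rw [show (2 : WithTop ℕ∞) = 1 + 1 from by norm_num,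
        contDiffOn_succ_iff_deriv_of_isOpen hVopen]
      exact ⟨hdiffV, by simp, hφC1.congr hderivEq⟩
    exact hC2Ebar.contDiffAt (hVopen.mem_nhds hVmem)
  · -- second derivative bound
    intro E hE
    set d := deriv Ibar E with hd
    have hd0 : (0:ℝ) < d := hDpos E hE
    have hφev : deriv Ebar =ᶠ[nhds (Ibar E)] (fun y => (deriv Ibar (Ebar y))⁻¹) := by
      refine (hnbhd E hE).mono (fun y hy => ?_)
      have h1 := (hEd (Ebar y) hy.1).hasDerivAt
      rw [hy.2] at h1
      exact h1.deriv
    have houter : HasDerivAt (deriv Ibar) (D2 E) E := by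
      have hev : deriv Ibar =ᶠ[nhds E] D1 :=
        Filter.eventuallyEq_of_mem (isOpen_Ioi.mem_nhds hE) hderiv1
      exact (hD1d E hE).congr_of_eventuallyEq hev
    have hinner : HasDerivAt (fun y => deriv Ibar (Ebar y)) (D2 E * d⁻¹) (Ibar E) := by
      have houter' : HasDerivAt (deriv Ibar) (D2 E) (Ebar (Ibar E)) := by
        rw [hleft E hE]; exact houter
      exact houter'.comp (Ibar E) (hEd E hE).hasDerivAt
    have hinv : HasDerivAt (fun y => (deriv Ibar (Ebar y))⁻¹)
        (-(D2 E * d⁻¹) / d ^ 2) (Ibar E) := by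
      have h1 := hinner.inv (by rw [hleft E hE, ← hd]; exact ne_of_gt hd0)
      rwa [hleft E hE, ← hd] at h1
    have hdd : deriv (deriv Ebar) (Ibar E) = -(D2 E * d⁻¹) / d ^ 2 :=
      hφev.deriv_eq.trans hinv.deriv
    rw [hdd]
    have hkeyE := hkey E hE
    rw [hderiv2 E hE, ← hd] at hkeyE
    have hdne : d ≠ 0 := ne_of_gt hd0
    have heq : -(D2 E * d⁻¹) / d ^ 2 = -(D2 E) / d ^ 3 := by
      rw [div_eq_div_iff (by positivity) (by positivity)]
      field_simp
    rw [heq, le_div_iff₀ (by positivity)]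
    linarith
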